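/- Let X₁ and X₂ be square-integrable real random variables that are conditionally independent given a random variable W. Then E[(X₁ − E[X₁])(X₂ − E[X₂])] ≤ sqrt((Var(X₁) − E[Var(X₁|W)])·(Var(X₂) − E[Var(X₂|W)])). -/

import Mathlib

open MeasureTheory

section Aux

variable {Ω : Type*} [m0 : MeasurableSpace Ω] {μ : Measure Ω}

lemma aux_integrable_mul {f g : Ω → ℝ} (hf : MemLp f 2 μ) (hg : MemLp g 2 μ) :
    Integrable (fun x => f x * g x) μ := by
  have h := L2.integrable_inner (𝕜 := ℝ) (hf.toLp f) (hg.toLp g)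
  refine h.congr ?_
  filter_upwards [hf.coeFn_toLp, hg.coeFn_toLp] with x h1 h2
  simp [h1, h2, mul_comm]

lemma aux_cs_integral {f g : Ω → ℝ} (hf : MemLp f 2 μ) (hg : MemLp g 2 μ) :
    ∫ x, f x * g x ∂μ ≤ Real.sqrt ((∫ x, f x ^ 2 ∂μ) * (∫ x, g x ^ 2 ∂μ)) := by
  set F := hf.toLp f with hF
  set G := hg.toLp g with hG
  have hFf : ⇑F =ᵐ[μ] f := hf.coeFn_toLp
  have hGg : ⇑G =ᵐ[μ] g := hg.coeFn_toLp
  have hinner : @inner ℝ _ _ F G = ∫ x, f x * g x ∂μ := by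
    rw [L2.inner_def]
    refine integral_congr_ae ?_
    filter_upwards [hFf, hGg] with x h1 h2
    simp [h1, h2, mul_comm]
  have hF2 : (∫ x, f x ^ 2 ∂μ) = ‖F‖ ^ 2 := by
    rw [← real_inner_self_eq_norm_sq, L2.inner_def]
    refine integral_congr_ae ?_
    filter_upwards [hFf] with x h1
    simp [h1, sq]
  have hG2 : (∫ x, g x ^ 2 ∂μ) = ‖G‖ ^ 2 := by
    rw [← real_inner_self_eq_norm_sq, L2.inner_def]
    refine integral_congr_ae ?_
    filter_upwards [hGg] with x h1
    simp [h1, sq]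
  calc ∫ x, f x * g x ∂μ = @inner ℝ _ _ F G := hinner.symm
    _ ≤ ‖F‖ * ‖G‖ := real_inner_le_norm F G
    _ = Real.sqrt ((∫ x, f x ^ 2 ∂μ) * (∫ x, g x ^ 2 ∂μ)) := by
        rw [hF2, hG2, Real.sqrt_mul (sq_nonneg _), Real.sqrt_sq (norm_nonneg _),
          Real.sqrt_sq (norm_nonneg _)]

end Aux

section Aux2

lemma aux_memℒp_two_condexp {Ω : Type*} {m : MeasurableSpace Ω} [m0 : MeasurableSpace Ω]
    {μ : Measure Ω} (hm : m ≤ m0) [IsFiniteMeasure μ]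
    {f : Ω → ℝ} (hf : MemLp f 2 μ) : MemLp (μ[f|m]) 2 μ := by
  haveI : SigmaFinite (μ.trim hm) := by
    haveI := isFiniteMeasure_trim (μ := μ) hm
    infer_instance
  have heq : (condExpL2 ℝ ℝ hm (hf.toLp f) : Ω → ℝ) =ᵐ[μ] μ[f|m] := by
    refine ae_eq_condExp_of_forall_setIntegral_eq hm (hf.integrable one_le_two) ?_ ?_ ?_
    · intro s _ _
      exact (integrable_condExpL2_of_isFiniteMeasure hm).integrableOn
    · intro s hs hμs
      rw [integral_condExpL2_eq hm (hf.toLp f) hs hμs.ne]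
      exact integral_congr_ae (ae_restrict_of_ae hf.coeFn_toLp)
    · exact aestronglyMeasurable_condExpL2 hm _
  exact (Lp.memLp ((condExpL2 ℝ ℝ hm (hf.toLp f) : lpMeas ℝ ℝ m 2 μ) : Lp ℝ 2 μ)).ae_eq heq

end Aux2

section Aux

variable {Ω : Type*} [m0 : MeasurableSpace Ω] {μ : Measure Ω}

lemma aux_expand [IsProbabilityMeasure μ] {f g : Ω → ℝ} {a b : ℝ}
    (hf : Integrable f μ) (hg : Integrable g μ)
    (hfg : Integrable (fun x => f x * g x) μ)
    (ha : ∫ x, f x ∂μ = a) (hb : ∫ x, g x ∂μ = b) :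
    ∫ x, (f x - a) * (g x - b) ∂μ = ∫ x, f x * g x ∂μ - a * b := by
  have h : ∀ x, (f x - a) * (g x - b) = f x * g x - b * f x - a * g x + a * b := by
    intro x; ring
  simp_rw [h]
  have i1 : Integrable (fun x => f x * g x - b * f x) μ := hfg.sub (hf.const_mul b)
  have i2 : Integrable (fun x => f x * g x - b * f x - a * g x) μ := i1.sub (hg.const_mul a)
  rw [integral_add i2 (integrable_const _), integral_sub i1 (hg.const_mul a),
    integral_sub hfg (hf.const_mul b), integral_const_mul, integral_const_mul,
    integral_const, ha, hb]
  simp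
  ring

end Aux

lemma aux_main {Ω : Type*} {m : MeasurableSpace Ω} [m0 : MeasurableSpace Ω] (hm : m ≤ m0)
    (μ : Measure Ω) [IsProbabilityMeasure μ] (X1 X2 : Ω → ℝ)
    (hX1 : MemLp X1 2 μ) (hX2 : MemLp X2 2 μ)
    (hcondindep : μ[fun ω => X1 ω * X2 ω|m] =ᵐ[μ]
      fun ω => (μ[X1|m]) ω * (μ[X2|m]) ω) :
    ∫ ω, (X1 ω - ∫ x, X1 x ∂μ) * (X2 ω - ∫ x, X2 x ∂μ) ∂μ ≤
      Real.sqrt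
        (((∫ x, (X1 x) ^ 2 ∂μ - (∫ x, X1 x ∂μ) ^ 2) -
            ∫ ω, ((μ[fun y => (X1 y) ^ 2|m]) ω - ((μ[X1|m]) ω) ^ 2) ∂μ) *
          ((∫ x, (X2 x) ^ 2 ∂μ - (∫ x, X2 x ∂μ) ^ 2) -
            ∫ ω, ((μ[fun y => (X2 y) ^ 2|m]) ω - ((μ[X2|m]) ω) ^ 2) ∂μ)) := by

  haveI : SigmaFinite (μ.trim hm) := by
    haveI := isFiniteMeasure_trim (μ := μ) hm
    infer_instance
  set a := ∫ x, X1 x ∂μ with ha_def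
  set b := ∫ x, X2 x ∂μ with hb_def
  set Y1 := μ[X1|m] with hY1_def
  set Y2 := μ[X2|m] with hY2_def
  have hX1i : Integrable X1 μ := hX1.integrable one_le_two
  have hX2i : Integrable X2 μ := hX2.integrable one_le_two
  have hX1sq : Integrable (fun x => X1 x ^ 2) μ := hX1.integrable_sq
  have hX2sq : Integrable (fun x => X2 x ^ 2) μ := hX2.integrable_sq
  have hY1L2 : MemLp Y1 2 μ := aux_memℒp_two_condexp hm hX1
  have hY2L2 : MemLp Y2 2 μ := aux_memℒp_two_condexp hm hX2
  have hY1i : Integrable Y1 μ := hY1L2.integrable one_le_two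
  have hY2i : Integrable Y2 μ := hY2L2.integrable one_le_two
  have hY1sq : Integrable (fun x => Y1 x ^ 2) μ := hY1L2.integrable_sq
  have hY2sq : Integrable (fun x => Y2 x ^ 2) μ := hY2L2.integrable_sq
  have hX1X2 : Integrable (fun x => X1 x * X2 x) μ := aux_integrable_mul hX1 hX2
  have hY1Y2 : Integrable (fun x => Y1 x * Y2 x) μ := aux_integrable_mul hY1L2 hY2L2
  have hYa : ∫ x, Y1 x ∂μ = a := integral_condExp hm
  have hYb : ∫ x, Y2 x ∂μ = b := integral_condExp hm
  -- equality of cross terms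
  have key2 : ∫ x, X1 x * X2 x ∂μ = ∫ x, Y1 x * Y2 x ∂μ := by
    rw [← integral_condExp hm]
    exact integral_congr_ae hcondindep
  have lhs_eq : ∫ ω, (X1 ω - a) * (X2 ω - b) ∂μ = ∫ ω, (Y1 ω - a) * (Y2 ω - b) ∂μ := by
    rw [aux_expand hX1i hX2i hX1X2 rfl rfl, aux_expand hY1i hY2i hY1Y2 hYa hYb, key2]
  -- compute the RHS factors
  have factor1 : (∫ x, (X1 x) ^ 2 ∂μ - a ^ 2) -
      ∫ ω, ((μ[fun y => (X1 y) ^ 2|m]) ω - Y1 ω ^ 2) ∂μ = ∫ ω, (Y1 ω - a) ^ 2 ∂μ := by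
    have h1 : ∫ ω, ((μ[fun y => (X1 y) ^ 2|m]) ω - Y1 ω ^ 2) ∂μ =
        ∫ x, (X1 x) ^ 2 ∂μ - ∫ x, Y1 x ^ 2 ∂μ := by
      rw [integral_sub integrable_condExp hY1sq, integral_condExp hm]
    have h2 : ∫ ω, (Y1 ω - a) ^ 2 ∂μ = ∫ x, Y1 x ^ 2 ∂μ - a * a := by
      have := aux_expand hY1i hY1i (by simpa [sq] using hY1sq) hYa hYa
      simpa [sq] using this
    rw [h1, h2]; ring
  have factor2 : (∫ x, (X2 x) ^ 2 ∂μ - b ^ 2) -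
      ∫ ω, ((μ[fun y => (X2 y) ^ 2|m]) ω - Y2 ω ^ 2) ∂μ = ∫ ω, (Y2 ω - b) ^ 2 ∂μ := by
    have h1 : ∫ ω, ((μ[fun y => (X2 y) ^ 2|m]) ω - Y2 ω ^ 2) ∂μ =
        ∫ x, (X2 x) ^ 2 ∂μ - ∫ x, Y2 x ^ 2 ∂μ := by
      rw [integral_sub integrable_condExp hY2sq, integral_condExp hm]
    have h2 : ∫ ω, (Y2 ω - b) ^ 2 ∂μ = ∫ x, Y2 x ^ 2 ∂μ - b * b := by
      have := aux_expand hY2i hY2i (by simpa [sq] using hY2sq) hYb hYb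
      simpa [sq] using this
    rw [h1, h2]; ring
  rw [lhs_eq, factor1, factor2]
  have hcs := aux_cs_integral (hY1L2.sub (memLp_const a)) (hY2L2.sub (memLp_const b))
  simpa using hcs

theorem cross_covariance_le_sqrt
    {Ω β : Type*} [MeasurableSpace Ω] {mβ : MeasurableSpace β}
    (μ : Measure Ω) [IsProbabilityMeasure μ]
    (X1 X2 : Ω → ℝ) (W : Ω → β)
    (hX1 : MemLp X1 2 μ) (hX2 : MemLp X2 2 μ) (hW : Measurable W)
    (hcondindep :
      condExp (MeasurableSpace.comap W mβ) μ (fun ω => X1 ω * X2 ω) =ᵐ[μ]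
        fun ω => condExp (MeasurableSpace.comap W mβ) μ X1 ω *
          condExp (MeasurableSpace.comap W mβ) μ X2 ω) :
    ∫ ω, (X1 ω - ∫ x, X1 x ∂μ) * (X2 ω - ∫ x, X2 x ∂μ) ∂μ ≤
      Real.sqrt
        (((∫ x, (X1 x) ^ 2 ∂μ - (∫ x, X1 x ∂μ) ^ 2) -
            ∫ ω, (condExp (MeasurableSpace.comap W mβ) μ (fun y => (X1 y) ^ 2) ω -
              (condExp (MeasurableSpace.comap W mβ) μ X1 ω) ^ 2) ∂μ) *
          ((∫ x, (X2 x) ^ 2 ∂μ - (∫ x, X2 x ∂μ) ^ 2) -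
            ∫ ω, (condExp (MeasurableSpace.comap W mβ) μ (fun y => (X2 y) ^ 2) ω -
              (condExp (MeasurableSpace.comap W mβ) μ X2 ω) ^ 2) ∂μ)) :=
  aux_main hW.comap_le μ X1 X2 hX1 hX2 hcondindep
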